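/- In C[Gamma(n)] with n ≥ 1, theta_n(Delta_n^{M}) = Delta_{n-1}^{M} for every partition M with |M| ≤ n, with the convention Delta_{n-1}^{M} = 0 if |M| > n-1, where theta_n is the linear map induced by taking the upper-left (n-1)×(n-1) corner of matrices (equivalently, a ↦ a * eps_n restricted appropriately). -/

import Mathlib

open scoped BigOperators

/-- A partial bijection of `α`: a partially defined injective map,
encoded as an `Option`-valued function that is injective on its domain. -/
def PartialBij (α : Type*) : Type _ :=
  {f : α → Option α // ∀ x y z : α, f x = some z → f y = some z → x = y}

namespace PartialBij

variable {α : Type*}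

/-- Composition: `(g.comp f) x = g (f x)` (product of relations). -/
def comp (g f : PartialBij α) : PartialBij α :=
  ⟨fun x => (f.1 x).bind g.1, by
    intro x y z hx hy
    rcases Option.bind_eq_some_iff.mp hx with ⟨a, ha, ha'⟩
    rcases Option.bind_eq_some_iff.mp hy with ⟨b, hb, hb'⟩
    have hab : a = b := g.2 _ _ _ ha' hb'
    subst hab
    exact f.2 _ _ _ ha hb⟩

instance : Monoid (PartialBij α) where
  mul := comp
  one := ⟨fun x => some x, fun x y z hx hy =>
    (Option.some_inj.mp hx).trans (Option.some_inj.mp hy).symm⟩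
  mul_assoc a b c := Subtype.ext <| funext fun x => (Option.bind_assoc _ _ _).symm
  one_mul a := Subtype.ext <| funext fun x => by
    show (a.1 x).bind some = a.1 x
    cases a.1 x <;> rfl
  mul_one a := Subtype.ext <| funext fun x => rfl

theorem mul_def (g f : PartialBij α) (x : α) : (g * f).1 x = (f.1 x).bind g.1 := rfl

theorem one_def (x : α) : (1 : PartialBij α).1 x = some x := rfl

/-- The domain of a partial bijection. -/
def dom (f : PartialBij α) : Set α := {x | f.1 x ≠ none}

/-- The range of a partial bijection. -/
def ran (f : PartialBij α) : Set α := {y | ∃ x, f.1 x = some y}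

open Classical in
/-- The inverse partial bijection `γ*`. -/
noncomputable def inv (f : PartialBij α) : PartialBij α :=
  ⟨fun y => if h : ∃ x, f.1 x = some y then some h.choose else none, by
    intro a b z ha hb
    dsimp only at ha hb
    by_cases h1 : ∃ x, f.1 x = some a
    · by_cases h2 : ∃ x, f.1 x = some b
      · rw [dif_pos h1] at ha
        rw [dif_pos h2] at hb
        have ha' := h1.choose_spec
        have hb' := h2.choose_spec
        rw [Option.some_inj.mp ha] at ha'
        rw [Option.some_inj.mp hb] at hb'
        exact Option.some_inj.mp (ha'.symm.trans hb')
      · rw [dif_neg h2] at hb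
        exact absurd hb (by simp)
    · rw [dif_neg h1] at ha
      exact absurd ha (by simp)⟩

open Classical in
/-- The identity bijection `1_Y` of a subset `Y ⊆ α`. -/
noncomputable def idOn (Y : Set α) : PartialBij α :=
  ⟨fun x => if x ∈ Y then some x else none, by
    intro x y z hx hy
    dsimp only at hx hy
    split_ifs at hx hy
    exact (Option.some_inj.mp hx).trans (Option.some_inj.mp hy).symm⟩

/-- A permutation regarded as a (total) partial bijection. -/
def ofPerm (s : Equiv.Perm α) : PartialBij α :=
  ⟨fun x => some (s x), fun x y z hx hy =>
    s.injective ((Option.some_inj.mp hx).trans (Option.some_inj.mp hy).symm)⟩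

/-- The idempotent `ε_k`: the identity bijection of `α \ {k}`. -/
def eps [DecidableEq α] (k : α) : PartialBij α :=
  ⟨fun x => if x = k then none else some x, by
    intro x y z hx hy
    dsimp only at hx hy
    split_ifs at hx hy
    exact (Option.some_inj.mp hx).trans (Option.some_inj.mp hy).symm⟩

/-- `deg γ`: the number of points which are not fixed points of `γ`. -/
def deg {n : ℕ} (f : PartialBij (Fin n)) : ℕ :=
  (Finset.univ.filter fun i : Fin n => f.1 i ≠ some i).card

/-- `deg_m γ`: the number of points in `{m+1,…,n}` (0-indexed: indices `≥ m`)
which are not fixed points of `γ`. -/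
def degm {n : ℕ} (m : ℕ) (f : PartialBij (Fin n)) : ℕ :=
  (Finset.univ.filter fun i : Fin n => m ≤ i.val ∧ f.1 i ≠ some i).card

/-- The rank of a partial bijection: the cardinality of its domain. -/
def rank {n : ℕ} (f : PartialBij (Fin n)) : ℕ :=
  (Finset.univ.filter fun i : Fin n => f.1 i ≠ none).card

end PartialBij

namespace PartialBij

/-- The upper-left `n × n` corner of a partial bijection of `{1,…,n+1}`. -/
def corner {n : ℕ} (γ : PartialBij (Fin (n + 1))) : PartialBij (Fin n) :=
  ⟨fun i => (γ.1 i.castSucc).bind fun j => if h : j.val < n then some ⟨j.val, h⟩ else none, by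
    intro x y z hx hy
    dsimp only at hx hy
    rcases Option.bind_eq_some_iff.mp hx with ⟨a, ha, ha'⟩
    rcases Option.bind_eq_some_iff.mp hy with ⟨b, hb, hb'⟩
    have haz : a = z.castSucc := by
      by_cases h : a.val < n
      · rw [dif_pos h] at ha'
        have := Option.some_inj.mp ha'
        apply Fin.ext
        rw [← this]
        simp
      · rw [dif_neg h] at ha'
        exact absurd ha' (by simp)
    have hbz : b = z.castSucc := by
      by_cases h : b.val < n
      · rw [dif_pos h] at hb'
        have := Option.some_inj.mp hb'
        apply Fin.ext
        rw [← this]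
        simp
      · rw [dif_neg h] at hb'
        exact absurd hb' (by simp)
    subst haz
    rw [hbz] at hb
    exact Fin.castSucc_injective n (γ.2 _ _ _ ha hb)⟩

/-- The `0`-embedding `ψ : Γ(n) → Γ(n+1)` (extension by zero). -/
def extend0 {n : ℕ} (γ : PartialBij (Fin n)) : PartialBij (Fin (n + 1)) :=
  ⟨fun i => if h : i.val < n then (γ.1 ⟨i.val, h⟩).map Fin.castSucc else none, by
    intro x y z hx hy
    dsimp only at hx hy
    by_cases h1 : x.val < n
    · by_cases h2 : y.val < n
      · rw [dif_pos h1] at hx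
        rw [dif_pos h2] at hy
        rcases Option.map_eq_some_iff.mp hx with ⟨a, ha, ha'⟩
        rcases Option.map_eq_some_iff.mp hy with ⟨b, hb, hb'⟩
        have hab : a = b := Fin.castSucc_injective n (ha'.trans hb'.symm)
        subst hab
        have := γ.2 _ _ _ ha hb
        exact Fin.ext (by simpa using congrArg Fin.val this)
      · rw [dif_neg h2] at hy
        exact absurd hy (by simp)
    · rw [dif_neg h1] at hx
      exact absurd hx (by simp)⟩

/-- `θ_{n+1} : C[Γ(n+1)] → C[Γ(n)]`, the linear map striking the last
row and column of the monomial matrices. -/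
noncomputable def theta (n : ℕ) (a : MonoidAlgebra ℂ (PartialBij (Fin (n + 1)))) :
    MonoidAlgebra ℂ (PartialBij (Fin n)) :=
  MonoidAlgebra.ofCoeff (Finsupp.mapDomain corner a.coeff)

/-- The image of `Γ_m(n)` (partial bijections fixing each of the first `m` points)
inside the semigroup algebra `C[Γ(n)]`. -/
def Gset (m n : ℕ) : Set (MonoidAlgebra ℂ (PartialBij (Fin n))) :=
  {x | ∃ γ : PartialBij (Fin n), (∀ i : Fin n, i.val < m → γ.1 i = some i) ∧
    x = MonoidAlgebra.single γ 1}

end PartialBij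

/-- Concatenation of compositions (the partition `M ∪ L`). -/
def Composition.app {a b : ℕ} (c₁ : Composition a) (c₂ : Composition b) :
    Composition (a + b) :=
  ⟨c₁.blocks ++ c₂.blocks,
   fun {i} hi => (List.mem_append.mp hi).elim (fun h => c₁.blocks_pos h)
     (fun h => c₂.blocks_pos h),
   by rw [List.sum_append, c₁.blocks_sum, c₂.blocks_sum]⟩

/-- `c_n^{M}` for a partition (composition) `M = (M_1,…,M_r)`:
the sum over all sequences of `|M|` pairwise distinct indices of the
product of the disjoint cycles of lengths `M_1,…,M_r`. -/
noncomputable def cElt (n : ℕ) {N : ℕ} (c : Composition N) :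
    MonoidAlgebra ℂ (Equiv.Perm (Fin n)) :=
  ∑ w : Fin N ↪ Fin n,
    MonoidAlgebra.single ((((List.ofFn ⇑w).splitWrtComposition c).map List.formPerm).prod) 1

/-- `c_n^{M}` for a partition `M` of `n`. -/
noncomputable def cPart (n : ℕ) (p : Nat.Partition n) :
    MonoidAlgebra ℂ (Equiv.Perm (Fin n)) :=
  cElt n ⟨p.parts.toList,
    fun {i} hi => p.parts_pos (Multiset.mem_toList.mp hi),
    by rw [Multiset.sum_toList]⟩

/-- `Δ_n^{M}` in `C[Γ(n)]`. -/
noncomputable def Delta (n : ℕ) {N : ℕ} (c : Composition N) :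
    MonoidAlgebra ℂ (PartialBij (Fin n)) :=
  ∑ w : Fin N ↪ Fin n,
    MonoidAlgebra.single
      (PartialBij.ofPerm ((((List.ofFn ⇑w).splitWrtComposition c).map List.formPerm).prod)) 1
    * (List.ofFn fun a : Fin N =>
        (1 - MonoidAlgebra.single (PartialBij.eps (w a)) (1 : ℂ))).prod

section Aux

open List Equiv Equiv.Perm

/-- `splitWrtCompositionAux` commutes with `map`. -/
theorem List.map_splitWrtCompositionAux {α β : Type*} (g : α → β) :
    ∀ (l : List α) (ns : List ℕ),
      (l.map g).splitWrtCompositionAux ns = (l.splitWrtCompositionAux ns).map (List.map g)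
  | _, [] => rfl
  | l, (n :: ns) => by
    rw [splitWrtCompositionAux_cons, splitWrtCompositionAux_cons, List.map_cons,
      ← List.map_take, ← List.map_drop, List.map_splitWrtCompositionAux g (l.drop n) ns]

theorem List.map_splitWrtComposition {α β : Type*} {m : ℕ} (g : α → β) (l : List α)
    (c : Composition m) :
    (l.map g).splitWrtComposition c = (l.splitWrtComposition c).map (List.map g) :=
  List.map_splitWrtCompositionAux g l c.blocks

theorem Equiv.Perm.viaEmbeddingHom_swap {α β : Type*} [DecidableEq α] [DecidableEq β]
    (ι : α ↪ β) (a b : α) :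
    Equiv.Perm.viaEmbeddingHom ι (Equiv.swap a b) = Equiv.swap (ι a) (ι b) := by
  rw [viaEmbeddingHom_apply]
  ext x
  by_cases hx : x ∈ Set.range ι
  · obtain ⟨c, rfl⟩ := hx
    rw [viaEmbedding_apply]
    rcases eq_or_ne c a with rfl | hca
    · simp
    rcases eq_or_ne c b with rfl | hcb
    · simp
    rw [Equiv.swap_apply_of_ne_of_ne hca hcb,
      Equiv.swap_apply_of_ne_of_ne (fun h => hca (ι.injective h)) (fun h => hcb (ι.injective h))]
  · rw [viaEmbedding_apply_of_notMem _ _ _ hx,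
      Equiv.swap_apply_of_ne_of_ne (fun h => hx ⟨a, h.symm⟩) (fun h => hx ⟨b, h.symm⟩)]

theorem List.formPerm_map {α β : Type*} [DecidableEq α] [DecidableEq β] (ι : α ↪ β) :
    ∀ l : List α, (l.map ι).formPerm = Equiv.Perm.viaEmbeddingHom ι l.formPerm
  | [] => by simp [map_one]
  | [a] => by simp [map_one]
  | (a :: b :: l) => by
    rw [List.map_cons, List.map_cons, formPerm_cons_cons, formPerm_cons_cons, map_mul,
      viaEmbeddingHom_swap, ← List.map_cons (f := ⇑ι) (a := b) (l := l), List.formPerm_map ι (b :: l)]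

end Aux
namespace PartialBij

variable {n : ℕ}

/-- `Fin.castSucc` as an embedding. -/
def castSuccEmb (n : ℕ) : Fin n ↪ Fin (n + 1) :=
  ⟨Fin.castSucc, Fin.castSucc_injective n⟩

/-- Extension of a partial bijection of `{1,…,n}` to one of `{1,…,n+1}` fixing the
last point. -/
def extend1 (f : PartialBij (Fin n)) : PartialBij (Fin (n + 1)) :=
  ⟨fun i => if h : i.val < n then (f.1 ⟨i.val, h⟩).map Fin.castSucc else some i, by
    intro x y z hx hy
    dsimp only at hx hy
    by_cases h1 : x.val < n
    · rw [dif_pos h1] at hx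
      rcases Option.map_eq_some_iff.mp hx with ⟨a, ha, ha'⟩
      by_cases h2 : y.val < n
      · rw [dif_pos h2] at hy
        rcases Option.map_eq_some_iff.mp hy with ⟨b, hb, hb'⟩
        have hab : a = b := Fin.castSucc_injective n (ha'.trans hb'.symm)
        subst hab
        have := f.2 _ _ _ ha hb
        exact Fin.ext (by simpa using congrArg Fin.val this)
      · rw [dif_neg h2] at hy
        have hy' : y = z := Option.some_inj.mp hy
        exact (h2 (by rw [hy', ← ha']; exact a.2)).elim
    · rw [dif_neg h1] at hx
      have hx' : x = z := Option.some_inj.mp hx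
      by_cases h2 : y.val < n
      · rw [dif_pos h2] at hy
        rcases Option.map_eq_some_iff.mp hy with ⟨b, hb, hb'⟩
        exact (h1 (by rw [hx', ← hb']; exact b.2)).elim
      · rw [dif_neg h2] at hy
        exact hx'.trans (Option.some_inj.mp hy).symm⟩

theorem extend1_apply_lt (f : PartialBij (Fin n)) {i : Fin (n + 1)} (h : i.val < n) :
    (extend1 f).1 i = (f.1 ⟨i.val, h⟩).map Fin.castSucc :=
  dif_pos h

theorem extend1_apply_ge (f : PartialBij (Fin n)) {i : Fin (n + 1)} (h : ¬i.val < n) :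
    (extend1 f).1 i = some i :=
  dif_neg h

theorem eps_apply (k x : Fin n) : (eps k).1 x = if x = k then none else some x := rfl

theorem extend1_one : extend1 (1 : PartialBij (Fin n)) = 1 := by
  apply Subtype.ext
  funext i
  by_cases h : i.val < n
  · rw [extend1_apply_lt _ h]
    show ((some (⟨i.val, h⟩ : Fin n)).map Fin.castSucc) = some i
    simp [Fin.ext_iff]
  · rw [extend1_apply_ge _ h]
    rfl

theorem extend1_mul (g f : PartialBij (Fin n)) :
    extend1 (g * f) = extend1 g * extend1 f := by
  apply Subtype.ext
  funext i
  rw [mul_def]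
  by_cases h : i.val < n
  · rw [extend1_apply_lt _ h, extend1_apply_lt _ h, mul_def]
    cases hf : f.1 ⟨i.val, h⟩ with
    | none => simp
    | some j =>
      simp only [Option.map_some, Option.bind_some, Option.bind_none]
      rw [extend1_apply_lt g (show (j.castSucc : Fin (n+1)).val < n from j.2)]
      congr 1
  · rw [extend1_apply_ge _ h, extend1_apply_ge _ h, Option.bind_some,
      extend1_apply_ge _ h]

/-- `extend1` as a monoid homomorphism. -/
def extend1Hom (n : ℕ) : PartialBij (Fin n) →* PartialBij (Fin (n + 1)) :=
  ⟨⟨extend1, extend1_one⟩, extend1_mul⟩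

theorem corner_extend1 (f : PartialBij (Fin n)) : corner (extend1 f) = f := by
  apply Subtype.ext
  funext j
  show ((extend1 f).1 j.castSucc).bind _ = f.1 j
  rw [extend1_apply_lt f (show (j.castSucc : Fin (n+1)).val < n from j.2)]
  have : (⟨(j.castSucc : Fin (n+1)).val, j.2⟩ : Fin n) = j := Fin.ext rfl
  rw [this]
  cases hf : f.1 j with
  | none => rfl
  | some a =>
    simp only [Option.map_some, Option.bind_some]
    rw [dif_pos (show ((a.castSucc : Fin (n+1)).val < n) from a.2)]
    congr 1

theorem extend1_eps (k : Fin n) : extend1 (eps k) = eps k.castSucc := by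
  apply Subtype.ext
  funext i
  rw [eps_apply]
  by_cases h : i.val < n
  · rw [extend1_apply_lt _ h, eps_apply]
    by_cases hk : (⟨i.val, h⟩ : Fin n) = k
    · rw [if_pos hk, if_pos (by subst hk; exact Fin.ext rfl)]
      rfl
    · rw [if_neg hk, if_neg (fun hc => hk (by subst hc; exact Fin.ext rfl))]
      simp [Fin.ext_iff]
  · rw [extend1_apply_ge _ h,
      if_neg (fun hc => h (by rw [hc]; exact k.2))]

theorem extend1_ofPerm (σ : Equiv.Perm (Fin n)) :
    extend1 (ofPerm σ) = ofPerm (Equiv.Perm.viaEmbeddingHom (castSuccEmb n) σ) := by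
  apply Subtype.ext
  funext i
  rw [Equiv.Perm.viaEmbeddingHom_apply]
  show (extend1 (ofPerm σ)).1 i = some (σ.viaEmbedding (castSuccEmb n) i)
  by_cases h : i.val < n
  · rw [extend1_apply_lt _ h]
    have h2 : (castSuccEmb n) ⟨i.val, h⟩ = i := Fin.ext rfl
    have := Equiv.Perm.viaEmbedding_apply σ (castSuccEmb n) ⟨i.val, h⟩
    rw [h2] at this
    rw [this]
    rfl
  · rw [extend1_apply_ge _ h, Equiv.Perm.viaEmbedding_apply_of_notMem]
    rintro ⟨a, rfl⟩
    exact h a.2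

theorem corner_mul_eps_last (γ : PartialBij (Fin (n + 1))) :
    corner (γ * eps (Fin.last n)) = corner γ := by
  apply Subtype.ext
  funext j
  show ((γ * eps (Fin.last n)).1 j.castSucc).bind _ = (γ.1 j.castSucc).bind _
  rw [mul_def, eps_apply, if_neg (Fin.castSucc_lt_last j).ne, Option.bind_some]

theorem eps_comm (k l : Fin n) : eps k * eps l = eps l * eps k := by
  apply Subtype.ext
  funext x
  rw [mul_def, mul_def, eps_apply, eps_apply]
  by_cases hl : x = l <;> by_cases hk : x = k <;> simp_all [eps]

end PartialBij
namespace PartialBij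

variable {n : ℕ}

theorem theta_add (x y : MonoidAlgebra ℂ (PartialBij (Fin (n + 1)))) :
    theta n (x + y) = theta n x + theta n y := MonoidAlgebra.mapDomain_add _ _ _

/-- `theta` as an additive monoid homomorphism. -/
noncomputable def thetaHom (n : ℕ) :
    MonoidAlgebra ℂ (PartialBij (Fin (n + 1))) →+ MonoidAlgebra ℂ (PartialBij (Fin n)) :=
  ⟨⟨theta n, MonoidAlgebra.mapDomain_zero _⟩, theta_add⟩

theorem theta_mul_eps_last (x : MonoidAlgebra ℂ (PartialBij (Fin (n + 1)))) :
    theta n (x * MonoidAlgebra.single (eps (Fin.last n)) 1) = theta n x := by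
  induction x using MonoidAlgebra.induction_linear with
  | zero => rw [zero_mul]
  | add f g hf hg =>
    rw [add_mul]
    show thetaHom n _ = thetaHom n _
    rw [map_add, map_add]
    exact congrArg₂ (· + ·) hf hg
  | single γ c =>
    show theta n (MonoidAlgebra.single γ c * MonoidAlgebra.single (eps (Fin.last n)) 1) = _
    rw [MonoidAlgebra.single_mul_single, mul_one]
    show MonoidAlgebra.mapDomain corner _ = MonoidAlgebra.mapDomain corner _
    rw [MonoidAlgebra.mapDomain_single, MonoidAlgebra.mapDomain_single, corner_mul_eps_last]

theorem commute_one_sub_eps {m : ℕ} (k l : Fin m) :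
    Commute (1 - MonoidAlgebra.single (eps k) (1 : ℂ))
      (1 - MonoidAlgebra.single (eps l) (1 : ℂ)) := by
  have hab : Commute (MonoidAlgebra.single (eps k) (1 : ℂ))
      (MonoidAlgebra.single (eps l) (1 : ℂ)) := by
    show _ * _ = _ * _
    rw [MonoidAlgebra.single_mul_single, MonoidAlgebra.single_mul_single, eps_comm]
  exact (Commute.one_left _).sub_left ((Commute.one_right _).sub_right hab)

theorem theta_mul_prod_eps_zero {N : ℕ}
    (X : MonoidAlgebra ℂ (PartialBij (Fin (n + 1)))) (w : Fin N → Fin (n + 1))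
    (a0 : Fin N) (hw : w a0 = Fin.last n) :
    theta n (X * (List.ofFn fun a : Fin N =>
      (1 - MonoidAlgebra.single (eps (w a)) (1 : ℂ))).prod) = 0 := by
  classical
  set f : Fin N → MonoidAlgebra ℂ (PartialBij (Fin (n + 1))) :=
    fun a => 1 - MonoidAlgebra.single (eps (w a)) (1 : ℂ) with hf
  have hx : f a0 ∈ List.ofFn f := List.mem_ofFn.mpr ⟨a0, rfl⟩
  have hc : (List.ofFn f).Pairwise Commute :=
    List.pairwise_ofFn.mpr fun i j _ => commute_one_sub_eps _ _
  have hperm : List.Perm (List.ofFn f) ((List.ofFn f).erase (f a0) ++ [f a0]) :=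
    (List.perm_cons_erase hx).trans (List.perm_append_singleton _ _).symm
  have hprod : (List.ofFn f).prod = ((List.ofFn f).erase (f a0)).prod * f a0 := by
    rw [hperm.prod_eq' hc, List.prod_append, List.prod_singleton]
  rw [hprod, ← mul_assoc, hf]
  simp only [hw]
  rw [mul_sub, mul_one]
  show thetaHom n _ = 0
  rw [map_sub]
  rw [sub_eq_zero]
  exact (theta_mul_eps_last _).symm

end PartialBij
theorem formPerm_prod_map_castSucc {n N : ℕ} (M : Composition N) (v : Fin N ↪ Fin n) :
    (((List.ofFn ⇑(v.trans (PartialBij.castSuccEmb n))).splitWrtComposition M).map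
        List.formPerm).prod =
      Equiv.Perm.viaEmbeddingHom (PartialBij.castSuccEmb n)
        ((((List.ofFn ⇑v).splitWrtComposition M).map List.formPerm).prod) := by
  have h1 : List.ofFn ⇑(v.trans (PartialBij.castSuccEmb n)) =
      (List.ofFn ⇑v).map (PartialBij.castSuccEmb n) := by
    rw [List.map_ofFn]; rfl
  rw [h1, List.map_splitWrtComposition, List.map_map]
  have h2 : (List.formPerm ∘ List.map ⇑(PartialBij.castSuccEmb n) :
      List (Fin n) → Equiv.Perm (Fin (n + 1))) =
      ⇑(Equiv.Perm.viaEmbeddingHom (PartialBij.castSuccEmb n)) ∘ List.formPerm := by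
    funext l; exact List.formPerm_map _ l
  rw [h2, ← List.map_map, ← map_list_prod]

theorem term_extend {n N : ℕ} (M : Composition N) (v : Fin N ↪ Fin n) :
    (MonoidAlgebra.single (PartialBij.ofPerm
        ((((List.ofFn ⇑(v.trans (PartialBij.castSuccEmb n))).splitWrtComposition M).map
          List.formPerm).prod)) (1 : ℂ)
      * (List.ofFn fun a : Fin N =>
          (1 - MonoidAlgebra.single
            (PartialBij.eps ((v.trans (PartialBij.castSuccEmb n)) a)) (1 : ℂ))).prod)
    = MonoidAlgebra.mapDomain PartialBij.extend1
        (MonoidAlgebra.single (PartialBij.ofPerm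
          ((((List.ofFn ⇑v).splitWrtComposition M).map List.formPerm).prod)) 1
        * (List.ofFn fun a : Fin N =>
            (1 - MonoidAlgebra.single (PartialBij.eps (v a)) (1 : ℂ))).prod) := by
  have hφ : ∀ x, MonoidAlgebra.mapDomain PartialBij.extend1 x =
      MonoidAlgebra.mapDomainRingHom ℂ (PartialBij.extend1Hom n) x := fun _ => rfl
  rw [hφ, map_mul, map_list_prod]
  congr 1
  · show _ = MonoidAlgebra.mapDomain ⇑(PartialBij.extend1Hom n) (MonoidAlgebra.single _ 1)
    rw [MonoidAlgebra.mapDomain_single]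
    show MonoidAlgebra.single _ _ = MonoidAlgebra.single (PartialBij.extend1 _) 1
    rw [PartialBij.extend1_ofPerm, formPerm_prod_map_castSucc]
  · rw [List.map_ofFn]
    refine congrArg List.prod (congrArg List.ofFn (funext fun a => ?_))
    show _ = MonoidAlgebra.mapDomainRingHom ℂ (PartialBij.extend1Hom n)
      (1 - MonoidAlgebra.single (PartialBij.eps (v a)) 1)
    rw [map_sub, map_one]
    have hs : (MonoidAlgebra.mapDomainRingHom ℂ (PartialBij.extend1Hom n))
        (MonoidAlgebra.single (PartialBij.eps (v a)) (1 : ℂ))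
        = MonoidAlgebra.single (PartialBij.eps ((v a).castSucc)) 1 := by
      show MonoidAlgebra.mapDomain ⇑(PartialBij.extend1Hom n) _ = _
      rw [MonoidAlgebra.mapDomain_single]
      show MonoidAlgebra.single (PartialBij.extend1 (PartialBij.eps (v a))) 1 = _
      rw [PartialBij.extend1_eps]
    rw [hs]
    rfl

/-- `θ_{n+1}(Δ_{n+1}^{M}) = Δ_n^{M}` (with the convention that `Δ_n^{M} = 0`
when `|M| > n`, which holds automatically since there are no sequences of
`|M|` pairwise distinct indices in `{1,…,n}`). -/
theorem theta_Delta (n : ℕ) {N : ℕ} (M : Composition N) (h : N ≤ n + 1) :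
    PartialBij.theta n (Delta (n + 1) M) = Delta n M := by
  rw [Delta, Delta]
  show PartialBij.thetaHom n _ = _
  rw [map_sum]
  rw [← Finset.sum_filter_of_ne
    (p := fun w : Fin N ↪ Fin (n + 1) => ∀ a, w a ≠ Fin.last n) ?hzero]
  case hzero =>
    intro w _ hne
    by_contra hP
    push_neg at hP
    obtain ⟨a0, ha0⟩ := hP
    exact hne (PartialBij.theta_mul_prod_eps_zero _ _ a0 ha0)
  have himg : (Finset.univ.filter fun w : Fin N ↪ Fin (n + 1) => ∀ a, w a ≠ Fin.last n)
      = Finset.univ.image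
          (fun v : Fin N ↪ Fin n => v.trans (PartialBij.castSuccEmb n)) := by
    ext w
    simp only [Finset.mem_filter, Finset.mem_image, Finset.mem_univ, true_and]
    constructor
    · intro hP
      refine ⟨⟨fun a => (w a).castLT (Fin.val_lt_last (hP a)), ?_⟩, ?_⟩
      · intro a b hab
        have h2 := congrArg Fin.val hab
        exact w.injective (Fin.ext h2)
      · exact DFunLike.ext _ _ fun a => rfl
    · rintro ⟨v, rfl⟩ a
      exact (Fin.castSucc_lt_last (v a)).ne
  rw [himg, Finset.sum_image (by
    intro v₁ _ v₂ _ hv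
    exact DFunLike.ext _ _ fun a =>
      Fin.castSucc_injective n (DFunLike.congr_fun hv a))]
  refine Finset.sum_congr rfl fun v _ => ?_
  show PartialBij.theta n _ = _
  rw [term_extend M v]
  show MonoidAlgebra.ofCoeff (Finsupp.mapDomain PartialBij.corner
    (Finsupp.mapDomain PartialBij.extend1 _)) = _
  rw [← Finsupp.mapDomain_comp]
  have hcid : (PartialBij.corner ∘ PartialBij.extend1 :
      PartialBij (Fin n) → PartialBij (Fin n)) = id :=
    funext PartialBij.corner_extend1
  rw [hcid, Finsupp.mapDomain_id]
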